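/- Let F be a totally imaginary number field and let Φ be a CM-type of F, with associated subspace U_Φ of F ⊗_ℚ ℂ. Then the only ℂ-linear map f : σ(U_Φ) → U_Φ commuting with multiplication by every element of F (acting ℂ-linearly on F ⊗_ℚ ℂ via x · (y ⊗ z) = (x·y) ⊗ z) is the zero map; i.e., the F-action on the Hodge structure (F, U_Φ) is rigid. -/

import Mathlib

open scoped TensorProduct

noncomputable section

instance : RingHomSurjective (starRingEnd ℂ) :=
  ⟨fun z => ⟨star z, by simp⟩⟩

/-- Complex conjugation as a `ℚ`-linear map on `ℂ`. -/
def conjQLin : ℂ →ₗ[ℚ] ℂ where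
  toFun z := (starRingEnd ℂ) z
  map_add' := by intros; simp
  map_smul' := by intro q z; simp [Rat.smul_def, map_mul]

/-- The antilinear involution `σ` on `ℂ ⊗[ℚ] V` determined by conjugation on the
first factor, packaged as a `starRingEnd ℂ`-semilinear map. -/
def sigmaV (V : Type*) [AddCommGroup V] [Module ℚ V] :
    (ℂ ⊗[ℚ] V) →ₛₗ[starRingEnd ℂ] (ℂ ⊗[ℚ] V) where
  toFun := TensorProduct.map conjQLin LinearMap.id
  map_add' := map_add _
  map_smul' c x := by
    induction x using TensorProduct.induction_on with
    | zero => simp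
    | tmul z v =>
        simp [TensorProduct.smul_tmul', smul_eq_mul, conjQLin, map_mul]
    | add x y hx hy =>
        simp only [smul_add, map_add]
        exact congrArg₂ (· + ·) hx hy

/-- `σ(U)`, the image of a `ℂ`-subspace `U` of `ℂ ⊗[ℚ] V` under the conjugation
involution; it is again a `ℂ`-subspace. -/
def sigmaSub {V : Type*} [AddCommGroup V] [Module ℚ V]
    (U : Submodule ℂ (ℂ ⊗[ℚ] V)) : Submodule ℂ (ℂ ⊗[ℚ] V) :=
  U.map (sigmaV V)

/-- A `ℂ`-linear map `f : P → Q` between subspaces of `ℂ ⊗[ℚ] V` commutes with an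
operator `T` of the ambient space. -/
def CommutesWith {V : Type*} [AddCommGroup V] [Module ℚ V]
    (P Q : Submodule ℂ (ℂ ⊗[ℚ] V)) (f : P →ₗ[ℂ] Q)
    (T : (ℂ ⊗[ℚ] V) →ₗ[ℂ] (ℂ ⊗[ℚ] V)) : Prop :=
  ∀ (x : P) (hx : T ↑x ∈ P), (f ⟨T ↑x, hx⟩ : ℂ ⊗[ℚ] V) = T ↑(f x)

/-- `E` is a polarization of the weight-one rational Hodge structure `(V, U)`:
it is alternating, its `ℂ`-bilinear extension vanishes on `U × U`, and
`-i·E_ℂ(u, σ u)` is a positive real for every nonzero `u ∈ U`. -/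
def IsPolarization {V : Type*} [AddCommGroup V] [Module ℚ V]
    (U : Submodule ℂ (ℂ ⊗[ℚ] V)) (E : V →ₗ[ℚ] V →ₗ[ℚ] ℚ) : Prop :=
  (∀ x : V, E x x = 0) ∧
  (∀ u ∈ U, ∀ u' ∈ U, LinearMap.BilinForm.baseChange ℂ E u u' = 0) ∧
  (∀ u ∈ U, u ≠ 0 → ∃ r : ℝ, 0 < r ∧
    -Complex.I * LinearMap.BilinForm.baseChange ℂ E u (sigmaV V u) = (r : ℂ))


/-- A field is totally real if every ring homomorphism to `ℂ` has image in `ℝ`. -/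
def IsTotallyRealField (F : Type*) [Field F] : Prop :=
  ∀ σ : F →+* ℂ, ∀ x : F, ∃ r : ℝ, σ x = (r : ℂ)

/-- A field is totally imaginary if it admits no real embedding. -/
def IsTotallyImaginary (F : Type*) [Field F] : Prop :=
  IsEmpty (F →+* ℝ)

/-- A number field is a CM-field if it is totally imaginary and is a quadratic
extension of a totally real subfield. -/
def IsCMField (F : Type*) [Field F] : Prop :=
  IsTotallyImaginary F ∧
    ∃ K : Subfield F, IsTotallyRealField K ∧ Module.finrank K F = 2

/-- A CM-type on `F`: a set of embeddings `F → ℂ` containing exactly one of each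
conjugate pair. -/
def IsCMType (F : Type*) [Field F] (Φ : Set (F →+* ℂ)) : Prop :=
  ∀ σ : F →+* ℂ, Xor' (σ ∈ Φ) (σ ∈ (fun τ : F →+* ℂ => (starRingEnd ℂ).comp τ) '' Φ)

/-- The `ℂ`-algebra homomorphism `σ̃ : F ⊗_ℚ ℂ → ℂ` (realized on `ℂ ⊗[ℚ] F`)
induced by an embedding `σ : F → ℂ`, as a `ℂ`-linear map: `σ̃(z ⊗ x) = z·σ(x)`. -/
def sigmaTilde (F : Type*) [Field F] [Algebra ℚ F] (σ : F →+* ℂ) :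
    (ℂ ⊗[ℚ] F) →ₗ[ℂ] ℂ :=
  TensorProduct.AlgebraTensorModule.lift
    { toFun := fun z => z • (RingHom.equivRatAlgHom F ℂ σ).toLinearMap
      map_add' := fun a b => add_smul a b _
      map_smul' := fun c z => by simp [mul_smul] }

/-- The Hodge structure `U_Φ ⊆ ℂ ⊗[ℚ] F` associated with a CM-type `Φ`: the subspace
annihilated by `σ̃` for every embedding `σ ∉ Φ`. -/
def UPhi (F : Type*) [Field F] [Algebra ℚ F] (Φ : Set (F →+* ℂ)) :
    Submodule ℂ (ℂ ⊗[ℚ] F) :=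
  ⨅ σ ∈ {σ : F →+* ℂ | σ ∉ Φ}, LinearMap.ker (sigmaTilde F σ)


section Aux

variable (F : Type*) [Field F] [Algebra ℚ F]

/-- `σ̃` as a `ℂ`-algebra homomorphism. -/
def algSigma (σ : F →+* ℂ) : (ℂ ⊗[ℚ] F) →ₐ[ℂ] ℂ :=
  Algebra.TensorProduct.lift (AlgHom.id ℂ ℂ) (RingHom.equivRatAlgHom F ℂ σ)
    (fun _ _ => Commute.all _ _)

theorem algSigma_tmul (σ : F →+* ℂ) (z : ℂ) (x : F) :
    algSigma F σ (z ⊗ₜ x) = z * σ x := by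
  simp [algSigma, Algebra.TensorProduct.lift_tmul, RingHom.equivRatAlgHom,
    RingHom.toRatAlgHom]

theorem sigmaTilde_eq (σ : F →+* ℂ) (v : ℂ ⊗[ℚ] F) :
    sigmaTilde F σ v = algSigma F σ v := by
  induction v using TensorProduct.induction_on with
  | zero => simp
  | tmul z x => simp [sigmaTilde, algSigma_tmul, RingHom.equivRatAlgHom, RingHom.toRatAlgHom,
      smul_eq_mul]
  | add a b ha hb => simp [map_add, ha, hb]

theorem sigmaTilde_mul (σ : F →+* ℂ) (a b : ℂ ⊗[ℚ] F) :
    sigmaTilde F σ (a * b) = sigmaTilde F σ a * sigmaTilde F σ b := by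
  simp only [sigmaTilde_eq, map_mul]

theorem sigmaTilde_one_tmul (σ : F →+* ℂ) (x : F) :
    sigmaTilde F σ ((1 : ℂ) ⊗ₜ x) = σ x := by
  rw [sigmaTilde_eq, algSigma_tmul, one_mul]

theorem sigmaTilde_sigmaV (ρ : F →+* ℂ) (v : ℂ ⊗[ℚ] F) :
    sigmaTilde F ρ (sigmaV F v) = (starRingEnd ℂ) (sigmaTilde F ((starRingEnd ℂ).comp ρ) v) := by
  induction v using TensorProduct.induction_on with
  | zero => simp
  | tmul z x =>
      rw [sigmaTilde_eq, sigmaTilde_eq]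
      show algSigma F ρ ((starRingEnd ℂ z) ⊗ₜ x) = _
      rw [algSigma_tmul, algSigma_tmul]
      simp [map_mul]
  | add a b ha hb => simp only [map_add, ha, hb, map_add]

theorem sigmaV_sigmaV' (v : ℂ ⊗[ℚ] F) : sigmaV F (sigmaV F v) = v := by
  induction v using TensorProduct.induction_on with
  | zero => simp
  | tmul z x =>
      show ((starRingEnd ℂ) ((starRingEnd ℂ) z)) ⊗ₜ x = z ⊗ₜ[ℚ] x
      simp
  | add a b ha hb => simp only [map_add, ha, hb]

theorem baseChange_mulLeft (x : F) (v : ℂ ⊗[ℚ] F) :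
    LinearMap.baseChange ℂ (LinearMap.mulLeft ℚ x) v = ((1 : ℂ) ⊗ₜ[ℚ] x) * v := by
  induction v using TensorProduct.induction_on with
  | zero => simp
  | tmul z y => simp [Algebra.TensorProduct.tmul_mul_tmul]
  | add a b ha hb => simp [map_add, ha, hb, mul_add]

theorem mem_UPhi_iff (Φ : Set (F →+* ℂ)) (v : ℂ ⊗[ℚ] F) :
    v ∈ UPhi F Φ ↔ ∀ σ : F →+* ℂ, σ ∉ Φ → sigmaTilde F σ v = 0 := by
  simp [UPhi, Submodule.mem_iInf, LinearMap.mem_ker, Set.mem_setOf_eq]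

theorem mem_sigmaSub_UPhi_iff (Φ : Set (F →+* ℂ)) (v : ℂ ⊗[ℚ] F) :
    v ∈ sigmaSub (UPhi F Φ) ↔
      ∀ ρ : F →+* ℂ, ρ ∉ (fun τ : F →+* ℂ => (starRingEnd ℂ).comp τ) '' Φ →
        sigmaTilde F ρ v = 0 := by
  constructor
  · rintro ⟨w, hw, rfl⟩ ρ hρ
    rw [SetLike.mem_coe, mem_UPhi_iff] at hw
    have : sigmaTilde F ρ (sigmaV F w) = _ := sigmaTilde_sigmaV F ρ w
    rw [this, hw _ ?_, map_zero]
    intro hmem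
    exact hρ ⟨_, hmem, by ext y; simp⟩
  · intro h
    refine ⟨sigmaV F v, ?_, sigmaV_sigmaV' F v⟩
    rw [SetLike.mem_coe, mem_UPhi_iff]
    intro τ hτ
    rw [sigmaTilde_sigmaV, h _ ?_, map_zero]
    rintro ⟨ρ, hρ, hρτ⟩
    apply hτ
    have hρτ' : (starRingEnd ℂ).comp ((starRingEnd ℂ).comp ρ) =
        (starRingEnd ℂ).comp ((starRingEnd ℂ).comp τ) := congrArg _ hρτ
    have eρ : (starRingEnd ℂ).comp ((starRingEnd ℂ).comp ρ) = ρ := by ext y; simp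
    have eτ : (starRingEnd ℂ).comp ((starRingEnd ℂ).comp τ) = τ := by ext y; simp
    rw [eρ, eτ] at hρτ'
    rwa [← hρτ']

end Aux

section Main

variable (F : Type*) [Field F] [NumberField F]

theorem sigmaTilde_li :
    LinearIndependent ℂ (fun σ : F →+* ℂ => (sigmaTilde F σ : Module.Dual ℂ (ℂ ⊗[ℚ] F))) := by
  have h1 : LinearIndependent ℂ (fun f : (ℂ ⊗[ℚ] F) →* ℂ => (f : (ℂ ⊗[ℚ] F) → ℂ)) :=
    linearIndependent_monoidHom _ ℂ
  have hinj : Function.Injective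
      (fun σ : F →+* ℂ => ((algSigma F σ : (ℂ ⊗[ℚ] F) →+* ℂ) : (ℂ ⊗[ℚ] F) →* ℂ)) := by
    intro σ τ h
    ext x
    have := DFunLike.congr_fun h ((1 : ℂ) ⊗ₜ[ℚ] x)
    simpa [algSigma_tmul] using this
  have h2 := h1.comp _ hinj
  have h3 : LinearIndependent ℂ (fun σ : F →+* ℂ => ⇑(sigmaTilde F σ)) := by
    have : (fun σ : F →+* ℂ => ⇑(sigmaTilde F σ)) = (fun σ : F →+* ℂ =>
        ⇑((algSigma F σ : (ℂ ⊗[ℚ] F) →+* ℂ) : (ℂ ⊗[ℚ] F) →* ℂ)) := by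
      funext σ v
      rw [sigmaTilde_eq]; rfl
    rw [this]; exact h2
  exact h3.of_comp
    { toFun := fun φ : Module.Dual ℂ (ℂ ⊗[ℚ] F) => ⇑φ
      map_add' := fun a b => rfl
      map_smul' := fun c a => rfl }

theorem finrank_CF : Module.finrank ℂ (ℂ ⊗[ℚ] F) = Fintype.card (F →+* ℂ) := by
  rw [Module.finrank_baseChange, NumberField.Embeddings.card]

theorem eq_zero_of_forall_sigmaTilde (v : ℂ ⊗[ℚ] F)
    (h : ∀ σ : F →+* ℂ, sigmaTilde F σ v = 0) : v = 0 := by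
  have hspan : Submodule.span ℂ (Set.range (fun σ : F →+* ℂ =>
      (sigmaTilde F σ : Module.Dual ℂ (ℂ ⊗[ℚ] F)))) = ⊤ :=
    (sigmaTilde_li F).span_eq_top_of_card_eq_finrank
      (by rw [Subspace.dual_finrank_eq, finrank_CF])
  rw [← Module.forall_dual_apply_eq_zero_iff ℂ v]
  intro φ
  have hφ : φ ∈ Submodule.span ℂ (Set.range (fun σ : F →+* ℂ =>
      (sigmaTilde F σ : Module.Dual ℂ (ℂ ⊗[ℚ] F)))) := by
    rw [hspan]; trivial
  induction hφ using Submodule.span_induction with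
  | mem x hx => obtain ⟨σ, rfl⟩ := hx; exact h σ
  | zero => rfl
  | add a b _ _ ha hb => simp [LinearMap.add_apply, ha, hb]
  | smul c a _ ha => simp [LinearMap.smul_apply, ha]

theorem sigmaTilde_pi_surjective :
    Function.Surjective (LinearMap.pi (fun σ : F →+* ℂ => sigmaTilde F σ)) := by
  rw [← LinearMap.injective_iff_surjective_of_finrank_eq_finrank
    (by rw [finrank_CF, Module.finrank_pi])]
  intro a b hab
  rw [← sub_eq_zero]
  apply eq_zero_of_forall_sigmaTilde
  intro σ
  have hσ := congrFun hab σ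
  simp only [LinearMap.pi_apply] at hσ
  simp [map_sub, hσ]

end Main

/-- The action of a totally imaginary number field `F` on the Hodge structure
`(F, U_Φ)` associated with a CM-type `Φ` is rigid: the only `ℂ`-linear map
`σ(U_Φ) → U_Φ` commuting with multiplication by every element of `F` is zero. -/
theorem CMType_action_rigid
    (F : Type*) [Field F] [NumberField F]
    (hF : IsTotallyImaginary F) (Φ : Set (F →+* ℂ)) (hΦ : IsCMType F Φ) :
    ∀ f : sigmaSub (UPhi F Φ) →ₗ[ℂ] UPhi F Φ,
      (∀ x : F, CommutesWith (sigmaSub (UPhi F Φ)) (UPhi F Φ) f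
        (LinearMap.baseChange ℂ (LinearMap.mulLeft ℚ x))) → f = 0 := by
  classical
  intro f hf
  have hSmul : ∀ (e v : ℂ ⊗[ℚ] F), v ∈ sigmaSub (UPhi F Φ) → e * v ∈ sigmaSub (UPhi F Φ) := by
    intro e v hv
    rw [mem_sigmaSub_UPhi_iff] at hv ⊢
    intro ρ hρ
    rw [sigmaTilde_mul, hv ρ hρ, mul_zero]
  have key : ∀ (e : ℂ ⊗[ℚ] F) (u : sigmaSub (UPhi F Φ)),
      ((f ⟨e * ↑u, hSmul e _ u.2⟩ : UPhi F Φ) : ℂ ⊗[ℚ] F) = e * ↑(f u) := by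
    intro e
    induction e using TensorProduct.induction_on with
    | zero =>
        intro u
        have h0 : (⟨(0 : ℂ ⊗[ℚ] F) * ↑u, hSmul 0 _ u.2⟩ : sigmaSub (UPhi F Φ)) = 0 :=
          Subtype.ext (zero_mul _)
        rw [h0, map_zero, zero_mul]; rfl
    | tmul z x =>
        intro u
        have hx : LinearMap.baseChange ℂ (LinearMap.mulLeft ℚ x) ↑u ∈ sigmaSub (UPhi F Φ) := by
          rw [baseChange_mulLeft]; exact hSmul _ _ u.2
        have hcomm := hf x u hx
        have h1 : (⟨(z ⊗ₜ[ℚ] x) * ↑u, hSmul _ _ u.2⟩ : sigmaSub (UPhi F Φ)) =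
            z • ⟨LinearMap.baseChange ℂ (LinearMap.mulLeft ℚ x) ↑u, hx⟩ := by
          apply Subtype.ext
          show (z ⊗ₜ[ℚ] x) * ↑u = z • (LinearMap.baseChange ℂ (LinearMap.mulLeft ℚ x) ↑u)
          rw [baseChange_mulLeft, ← smul_mul_assoc]
          congr 1
          rw [TensorProduct.smul_tmul', smul_eq_mul, mul_one]
        rw [h1, map_smul, Submodule.coe_smul, hcomm, baseChange_mulLeft, ← smul_mul_assoc]
        congr 1
        rw [TensorProduct.smul_tmul', smul_eq_mul, mul_one]
    | add a b ha hb =>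
        intro u
        have h1 : (⟨(a + b) * ↑u, hSmul _ _ u.2⟩ : sigmaSub (UPhi F Φ)) =
            ⟨a * ↑u, hSmul a _ u.2⟩ + ⟨b * ↑u, hSmul b _ u.2⟩ :=
          Subtype.ext (add_mul _ _ _)
        rw [h1, map_add, Submodule.coe_add, ha u, hb u, add_mul]
  apply LinearMap.ext
  intro u
  have hval : ((f u : UPhi F Φ) : ℂ ⊗[ℚ] F) = 0 := by
    apply eq_zero_of_forall_sigmaTilde
    intro ρ
    by_cases hρ : ρ ∈ Φ
    · obtain ⟨e, he⟩ := sigmaTilde_pi_surjective F ((Pi.single ρ 1 : (F →+* ℂ) → ℂ))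
      have he' : ∀ τ : F →+* ℂ, sigmaTilde F τ e = (Pi.single ρ 1 : (F →+* ℂ) → ℂ) τ := by
        intro τ
        have := congrFun he τ
        simpa [LinearMap.pi_apply] using this
      have hρΦ' : ρ ∉ (fun τ : F →+* ℂ => (starRingEnd ℂ).comp τ) '' Φ := by
        rcases hΦ ρ with ⟨_, h2⟩ | ⟨_, h2⟩
        · exact h2
        · exact absurd hρ h2
      have heu : e * (↑u : ℂ ⊗[ℚ] F) = 0 := by
        apply eq_zero_of_forall_sigmaTilde
        intro τ
        rw [sigmaTilde_mul]
        by_cases hτ : τ = ρ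
        · subst hτ
          have hu0 : sigmaTilde F τ (↑u : ℂ ⊗[ℚ] F) = 0 := by
            have hum := u.2
            rw [mem_sigmaSub_UPhi_iff] at hum
            exact hum τ hρΦ'
          rw [hu0, mul_zero]
        · rw [he' τ, Pi.single_eq_of_ne hτ, zero_mul]
      have hfe : e * ((f u : UPhi F Φ) : ℂ ⊗[ℚ] F) = 0 := by
        rw [← key e u]
        have : (⟨e * ↑u, hSmul e _ u.2⟩ : sigmaSub (UPhi F Φ)) = 0 := Subtype.ext heu
        rw [this, map_zero]; rfl
      have := congrArg (sigmaTilde F ρ) hfe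
      rw [sigmaTilde_mul, he' ρ, Pi.single_eq_same, one_mul, map_zero] at this
      exact this
    · have hmem := (f u).2
      rw [mem_UPhi_iff] at hmem
      exact hmem ρ hρ
  show f u = 0
  exact Subtype.ext hval

end
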